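/- Let Γ ⊂ ℝⁿ be a full-rank lattice, ℝⁿ = ℝᵏ ⊕ ℝⁿ⁻ᵏ with projections p : ℝⁿ → ℝᵏ and q : ℝⁿ → ℝⁿ⁻ᵏ, and D ⊂ ℝⁿ⁻ᵏ a bounded set with ∂D ∩ q(Γ) = ∅. Assume q restricted to Γ is injective (equivalently Γ ∩ ℝᵏ = {0}) and that D is bounded. Then the set p(Γ ∩ q⁻¹(D)) ⊂ ℝᵏ is uniformly discrete: there exists ρ₂ > 0 such that any two distinct points of it are at distance ≥ ρ₂. -/

import Mathlib

/- STATEMENT 4: Cut-and-project: uniform discreteness of the model set.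
ℝⁿ = ℝᵏ ⊕ ℝˡ is realized as the product `(Fin k → ℝ) × (Fin l → ℝ)`, with
p = Prod.fst the projection to the physical space and q = Prod.snd to the
internal space. The full-rank lattice Γ is the ℤ-span of an ℝ-basis `b`.
If D is bounded, ∂D ∩ q(Γ) = ∅, and Γ ∩ ker q = {0} (q is injective on Γ),
then the model set p(Γ ∩ q⁻¹(D)) is uniformly discrete. -/
theorem stmt_4 (k l : ℕ) (b : Module.Basis (Fin (k + l)) ℝ ((Fin k → ℝ) × (Fin l → ℝ)))
    (D : Set (Fin l → ℝ)) (hD : Bornology.IsBounded D)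
    (hbd : frontier D ∩ {w | ∃ g ∈ Submodule.span ℤ (Set.range ⇑b), Prod.snd g = w} = ∅)
    (hinj : ∀ g ∈ Submodule.span ℤ (Set.range ⇑b), g.2 = 0 → g = 0) :
    ∃ ρ₂ > (0 : ℝ), ∀ g ∈ Submodule.span ℤ (Set.range ⇑b),
      ∀ g' ∈ Submodule.span ℤ (Set.range ⇑b),
        g.2 ∈ D → g'.2 ∈ D → g.1 ≠ g'.1 → ρ₂ ≤ ‖g.1 - g'.1‖ := by
  set E := (Fin k → ℝ) × (Fin l → ℝ)
  set Γ : Submodule ℤ E := Submodule.span ℤ (Set.range ⇑b) with hΓ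
  -- D bounded
  obtain ⟨M, hM⟩ := hD.subset_closedBall 0
  -- the lattice is discrete and closed
  haveI hdisc : DiscreteTopology ((Γ : Set E) : Type _) := inferInstanceAs (DiscreteTopology Γ)
  have hclosed : IsClosed (Γ : Set E) := by
    have : DiscreteTopology Γ.toAddSubgroup := inferInstanceAs (DiscreteTopology Γ)
    exact AddSubgroup.isClosed_of_discrete (H := Γ.toAddSubgroup)
  -- finitely many lattice points in a bounded region
  set R : ℝ := max 1 (2 * M) with hR
  have hfin : Set.Finite (Metric.closedBall (0 : E) R ∩ (Γ : Set E)) :=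
    Metric.finite_isBounded_inter_isClosed (isDiscrete_iff_discreteTopology.mpr hdisc) Metric.isBounded_closedBall hclosed
  set F : Set E := {x ∈ Metric.closedBall (0 : E) R ∩ (Γ : Set E) | x.1 ≠ 0}
  have hFfin : F.Finite := hfin.subset (fun x hx => hx.1)
  set N : Set ℝ := (fun x : E => ‖x.1‖) '' F with hN
  have hNfin : N.Finite := hFfin.image _
  have hNpos : ∀ r ∈ N, 0 < r := by
    rintro r ⟨x, hx, rfl⟩
    exact norm_pos_iff.2 hx.2
  -- choose ρ₂
  by_cases hNe : N.Nonempty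
  · refine ⟨min 1 (sInf N), lt_min one_pos (hNpos _ (hNe.csInf_mem hNfin)), ?_⟩
    intro g hg g' hg' hgD hg'D hne
    by_cases h1 : 1 ≤ ‖g.1 - g'.1‖
    · exact le_trans (min_le_left _ _) h1
    · push_neg at h1
      have hx : g - g' ∈ F := by
        refine ⟨⟨?_, Submodule.sub_mem _ hg hg'⟩, sub_ne_zero.2 hne⟩
        rw [Metric.mem_closedBall, dist_zero_right, Prod.norm_def]
        refine max_le ?_ ?_
        · exact le_trans h1.le (le_max_left _ _)
        · have h2 : ‖(g - g').2‖ ≤ ‖g.2‖ + ‖g'.2‖ := norm_sub_le _ _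
          have hg2 : ‖g.2‖ ≤ M := by simpa [dist_zero_right] using hM hgD
          have hg'2 : ‖g'.2‖ ≤ M := by simpa [dist_zero_right] using hM hg'D
          refine le_trans h2 (le_trans (by linarith) (le_max_right 1 (2 * M)))
      have : sInf N ≤ ‖(g - g').1‖ := csInf_le hNfin.bddBelow ⟨_, hx, rfl⟩
      exact le_trans (min_le_right _ _) this
  · refine ⟨1, one_pos, ?_⟩
    intro g hg g' hg' hgD hg'D hne
    by_contra hlt
    push_neg at hlt
    apply hNe
    refine ⟨‖(g - g').1‖, ⟨g - g', ⟨⟨?_, Submodule.sub_mem _ hg hg'⟩, sub_ne_zero.2 hne⟩, rfl⟩⟩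
    rw [Metric.mem_closedBall, dist_zero_right, Prod.norm_def]
    refine max_le (le_trans hlt.le (le_max_left _ _)) ?_
    have h2 : ‖(g - g').2‖ ≤ ‖g.2‖ + ‖g'.2‖ := norm_sub_le _ _
    have hg2 : ‖g.2‖ ≤ M := by simpa [dist_zero_right] using hM hgD
    have hg'2 : ‖g'.2‖ ≤ M := by simpa [dist_zero_right] using hM hg'D
    exact le_trans h2 (le_trans (by linarith) (le_max_right 1 (2 * M)))
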